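/- Let (D, 𝒜, μ) be a measure space such that L₂ = L₂(D, 𝒜, μ) is infinite-dimensional, and let F ⊂ L₂. Then there is an orthonormal system (b_k)_{k∈ℕ₀} in L₂ such that for all m ≥ 1, the orthogonal projection P_m onto span{b_k : k < m} satisfies sup_{f ∈ F} ‖f − P_m f‖_{L₂} ≤ 2 · d_{⌊m/4⌋}(F). -/

import Mathlib

/-!
Statement 13 (Lemma): Let `(D, 𝒜, μ)` be a measure space with `L₂(μ)` infinite-
dimensional, and let `F ⊂ L₂`.  Then there is an orthonormal system `(b_k)_{k∈ℕ₀}`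
in `L₂` such that for all `m ≥ 1`, the orthogonal projection `P_m` onto
`span {b_k : k < m}` satisfies `sup_{f∈F} ‖f − P_m f‖_{L₂} ≤ 2 d_{⌊m/4⌋}(F)`.
-/

open MeasureTheory ENNReal

noncomputable section

section AuxHilbert

open Submodule

variable {E : Type*} [NormedAddCommGroup E] [InnerProductSpace ℂ E]

local notation "⟪" x ", " y "⟫" => @inner ℂ _ _ x y

theorem aux_min (U : Submodule ℂ E) [HasOrthogonalProjection U] (y w : E) (hw : w ∈ U) :
    ‖y - orthogonalProjection U y‖ ≤ ‖y - w‖ := by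
  show ‖y - U.starProjection y‖ ≤ ‖y - w‖
  rw [starProjection_minimal]
  exact ciInf_le ⟨0, by rintro r ⟨x, rfl⟩; positivity⟩ (⟨w, hw⟩ : U)

theorem aux_unit [CompleteSpace E] (hinf : ¬FiniteDimensional ℂ E) (U : Submodule ℂ E)
    [FiniteDimensional ℂ U] : ∃ x : E, ‖x‖ = 1 ∧ ∀ u ∈ U, ⟪u, x⟫ = 0 := by
  have hne : U ≠ ⊤ := by
    rintro rfl
    exact hinf ((Submodule.topEquiv (R := ℂ) (M := E)).finiteDimensional)
  have hbot : Uᗮ ≠ ⊥ := fun h => hne (Submodule.orthogonal_eq_bot_iff.1 h)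
  obtain ⟨y, hyU, hy0⟩ := Submodule.exists_mem_ne_zero_of_ne_bot hbot
  refine ⟨((‖y‖⁻¹ : ℝ) : ℂ) • y, ?_, ?_⟩
  · rw [norm_smul]
    simp [norm_ne_zero_iff.2 hy0, inv_mul_cancel₀]
  · intro u hu
    rw [inner_smul_right, (Submodule.mem_orthogonal _ _).1 hyU u hu, mul_zero]

theorem aux_snoc [CompleteSpace E] (hinf : ¬FiniteDimensional ℂ E) {n : ℕ}
    (c : Fin n → E) (hc : Orthonormal ℂ c) (v : E) :
    ∃ x : E, Orthonormal ℂ (Fin.snoc c x : Fin (n+1) → E) ∧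
      v ∈ Submodule.span ℂ (Set.range (Fin.snoc c x : Fin (n+1) → E)) := by
  classical
  set S := Submodule.span ℂ (Set.range c) with hS
  haveI : FiniteDimensional ℂ S := FiniteDimensional.span_of_finite ℂ (Set.finite_range c)
  obtain ⟨x, hx1, hxo, hvmem⟩ :
      ∃ x : E, ‖x‖ = 1 ∧ (∀ u ∈ S, ⟪u, x⟫ = 0) ∧ v ∈ S ⊔ (ℂ ∙ x) := by
    by_cases hu : v - orthogonalProjection S v = 0
    · obtain ⟨x, hx1, hxo⟩ := aux_unit hinf S
      refine ⟨x, hx1, hxo, Submodule.mem_sup_left ?_⟩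
      have hveq : v = (orthogonalProjection S v : E) := by rwa [sub_eq_zero] at hu
      rw [hveq]
      exact (orthogonalProjection S v).2
    · set u := v - orthogonalProjection S v with hudef
      have huo : u ∈ Sᗮ := sub_starProjection_mem_orthogonal (K := S) v
      have hun : ‖u‖ ≠ 0 := norm_ne_zero_iff.2 hu
      refine ⟨((‖u‖⁻¹ : ℝ) : ℂ) • u, ?_, ?_, ?_⟩
      · rw [norm_smul]; simp [hun, inv_mul_cancel₀]
      · intro w hw
        rw [inner_smul_right, (Submodule.mem_orthogonal _ _).1 huo w hw, mul_zero]
      · have hvsum : v = (orthogonalProjection S v : E) + ((‖u‖ : ℝ) : ℂ) • (((‖u‖⁻¹ : ℝ) : ℂ) • u) := by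
          rw [smul_smul, ← Complex.ofReal_mul, mul_inv_cancel₀ hun]
          simp [hudef]
        rw [hvsum]
        exact Submodule.add_mem _ (Submodule.mem_sup_left (orthogonalProjection S v).2)
          (Submodule.mem_sup_right (Submodule.smul_mem _ _ (Submodule.mem_span_singleton_self _)))
  have hmemS : ∀ i : Fin n, c i ∈ S := fun i => Submodule.subset_span ⟨i, rfl⟩
  have hxc : ∀ i : Fin n, ⟪x, c i⟫ = 0 := by
    intro i
    rw [← inner_conj_symm, hxo _ (hmemS i), map_zero]
  refine ⟨x, ?_, ?_⟩
  · rw [orthonormal_iff_ite]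
    intro i j
    induction i using Fin.lastCases with
    | last =>
      induction j using Fin.lastCases with
      | last => simp [Fin.snoc_last, inner_self_eq_norm_sq_to_K, hx1]
      | cast j =>
        simp [Fin.snoc_last, Fin.snoc_castSucc, hxc j, (Fin.castSucc_lt_last j).ne']
    | cast i =>
      induction j using Fin.lastCases with
      | last =>
        simp [Fin.snoc_last, Fin.snoc_castSucc, hxo _ (hmemS i), (Fin.castSucc_lt_last i).ne]
      | cast j =>
        rw [Fin.snoc_castSucc, Fin.snoc_castSucc, orthonormal_iff_ite.1 hc i j]
        simp [Fin.castSucc_inj]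
  · have hle : S ⊔ (ℂ ∙ x) ≤ Submodule.span ℂ (Set.range (Fin.snoc c x : Fin (n+1) → E)) := by
      refine sup_le ?_ ?_
      · refine Submodule.span_mono ?_
        rintro y ⟨i, rfl⟩
        exact ⟨i.castSucc, Fin.snoc_castSucc _ _ i⟩
      · rw [Submodule.span_singleton_le_iff_mem]
        exact Submodule.subset_span ⟨Fin.last n, Fin.snoc_last _ _⟩
    exact hle hvmem

theorem aux_chain [CompleteSpace E] (hinf : ¬FiniteDimensional ℂ E) (v : ℕ → E) :
    ∃ b : ℕ → E, Orthonormal ℂ b ∧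
      ∀ m : ℕ, ∀ i < m, v i ∈ Submodule.span ℂ (b '' Set.Iio m) := by
  classical
  let P : (n : ℕ) → (Fin n → E) → Prop := fun n c =>
    Orthonormal ℂ c ∧ ∀ i : Fin n, v i ∈ Submodule.span ℂ (Set.range c)
  have base : P 0 (fun i => i.elim0) := ⟨⟨fun i => i.elim0, fun i => i.elim0⟩, fun i => i.elim0⟩
  have stepex : ∀ n (c : Fin n → E), P n c → ∃ x, P (n+1) (Fin.snoc c x) := by
    rintro n c ⟨hc, hmem⟩
    obtain ⟨x, hx1, hx2⟩ := aux_snoc hinf c hc (v n)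
    refine ⟨x, hx1, fun i => ?_⟩
    have hsub : Set.range c ⊆ Set.range (Fin.snoc c x : Fin (n+1) → E) := by
      rintro y ⟨j, rfl⟩; exact ⟨j.castSucc, Fin.snoc_castSucc _ _ j⟩
    induction i using Fin.lastCases with
    | last => simpa using hx2
    | cast i =>
      have := Submodule.span_mono hsub (hmem i)
      simpa using this
  choose step hstep using stepex
  let tup : (n : ℕ) → {c : Fin n → E // P n c} :=
    fun n => Nat.rec ⟨fun i => i.elim0, base⟩
      (fun n p => ⟨Fin.snoc p.1 (step n p.1 p.2), hstep n p.1 p.2⟩) n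
  have tsucc : ∀ n, (tup (n+1)).1 = Fin.snoc (tup n).1 (step n (tup n).1 (tup n).2) :=
    fun n => rfl
  let b : ℕ → E := fun n => (tup (n+1)).1 (Fin.last n)
  have key : ∀ n (i : Fin n), (tup n).1 i = b i := by
    intro n
    induction n with
    | zero => exact fun i => i.elim0
    | succ n ih =>
      intro i
      induction i using Fin.lastCases with
      | last => rfl
      | cast i =>
        rw [tsucc, Fin.snoc_castSucc]
        simpa using ih i
  have hbo : Orthonormal ℂ b := by
    rw [orthonormal_iff_ite]
    intro i j
    have hi : i < max i j + 1 := Nat.lt_succ_of_le (le_max_left i j)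
    have hj : j < max i j + 1 := Nat.lt_succ_of_le (le_max_right i j)
    have h1 : b i = (tup (max i j + 1)).1 ⟨i, hi⟩ := (key _ ⟨i, hi⟩).symm
    have h2 : b j = (tup (max i j + 1)).1 ⟨j, hj⟩ := (key _ ⟨j, hj⟩).symm
    rw [h1, h2, orthonormal_iff_ite.1 (tup (max i j + 1)).2.1]
    simp [Fin.mk.injEq]
  refine ⟨b, hbo, fun m i him => ?_⟩
  have hmem := (tup m).2.2 ⟨i, him⟩
  have hr : Set.range (tup m).1 = b '' Set.Iio m := by
    ext x
    constructor
    · rintro ⟨j, rfl⟩; exact ⟨j, j.2, (key m j).symm⟩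
    · rintro ⟨n, hn, rfl⟩; exact ⟨⟨n, hn⟩, key m ⟨n, hn⟩⟩
  rwa [hr] at hmem

theorem aux_pos [CompleteSpace E] {k : ℕ} (f : Fin (k+1) → E) (hf : LinearIndependent ℂ f) :
    ∃ δ : ℝ, 0 < δ ∧ ∀ (φ : Fin k → E) (g : Fin (k+1) → E),
      (∀ i, g i ∈ Submodule.span ℂ (Set.range φ)) → ∃ i, δ ≤ ‖f i - g i‖ := by
  classical
  set E₀ := Submodule.span ℂ (Set.range f) with hE₀
  haveI : FiniteDimensional ℂ E₀ := FiniteDimensional.span_of_finite ℂ (Set.finite_range f)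
  set B : Module.Basis (Fin (k+1)) ℂ E₀ := Module.Basis.span hf with hB
  set C : Fin (k+1) → ℝ := fun i => ‖LinearMap.toContinuousLinearMap (B.coord i)‖ with hCdef
  set M : ℝ := ∑ i, C i with hMdef
  have hC0 : ∀ i, 0 ≤ C i := fun i => by simp only [hCdef]; positivity
  have hM0 : 0 ≤ M := Finset.sum_nonneg fun i _ => hC0 i
  refine ⟨1 / (M + 1), by positivity, ?_⟩
  intro φ g hg
  by_contra hcon
  push_neg at hcon
  set P := orthogonalProjection E₀ with hP
  set W : Submodule ℂ E₀ := Submodule.span ℂ (Set.range fun j => P (φ j)) with hW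
  have hWne : W ≠ ⊤ := by
    intro htop
    have h1 : Module.finrank ℂ E₀ = k + 1 := by
      rw [hE₀, finrank_span_eq_card hf, Fintype.card_fin]
    have h2 : Module.finrank ℂ W ≤ k := by
      refine le_trans (finrank_span_le_card _) ?_
      rw [Set.toFinset_range]
      exact le_trans (Finset.card_image_le) (by simp)
    rw [htop, finrank_top, h1] at h2
    omega
  have hbot : Wᗮ ≠ ⊥ := fun h => hWne (Submodule.orthogonal_eq_bot_iff.1 h)
  obtain ⟨y, hyW, hy0⟩ := Submodule.exists_mem_ne_zero_of_ne_bot hbot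
  set u : E₀ := ((‖y‖⁻¹ : ℝ) : ℂ) • y with hu
  have hyn : ‖y‖ ≠ 0 := norm_ne_zero_iff.2 hy0
  have hu1 : ‖u‖ = 1 := by
    rw [hu, norm_smul]
    simp only [Complex.norm_real, norm_inv, norm_norm, Real.norm_eq_abs, abs_norm]
    exact inv_mul_cancel₀ hyn
  have huW : u ∈ Wᗮ := Submodule.smul_mem _ _ hyW
  have hip : ∀ i, ‖(⟪u, B i⟫ : ℂ)‖ ≤ ‖f i - g i‖ := by
    intro i
    have hfi : ((B i : E₀) : E) = f i := congrArg Subtype.val (Module.Basis.span_apply hf i)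
    have hPf : P (f i) = B i := by
      rw [← hfi]; exact orthogonalProjection_mem_subspace_eq_self (B i)
    have hPg : P (g i) ∈ W := by
      have h2 : P (g i) ∈ Submodule.map (P : E →ₗ[ℂ] E₀) (Submodule.span ℂ (Set.range φ)) :=
        Submodule.mem_map_of_mem (hg i)
      rwa [Submodule.map_span, ← Set.range_comp] at h2
    have h1 : B i - P (g i) = P (f i - g i) := by rw [map_sub, hPf]
    have h2 : ‖B i - P (g i)‖ ≤ ‖f i - g i‖ := by
      rw [h1]
      calc ‖P (f i - g i)‖ ≤ ‖P‖ * ‖f i - g i‖ := P.le_opNorm _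
        _ ≤ 1 * ‖f i - g i‖ :=
          mul_le_mul_of_nonneg_right (orthogonalProjection_norm_le E₀) (norm_nonneg _)
        _ = ‖f i - g i‖ := one_mul _
    have h3 : (⟪u, P (g i)⟫ : ℂ) = 0 := (Submodule.mem_orthogonal' _ _).1 huW _ hPg
    calc ‖(⟪u, B i⟫ : ℂ)‖ = ‖(⟪u, B i - P (g i)⟫ : ℂ)‖ := by
          rw [inner_sub_right, h3, sub_zero]
      _ ≤ ‖u‖ * ‖B i - P (g i)‖ := norm_inner_le_norm _ _
      _ = ‖B i - P (g i)‖ := by rw [hu1, one_mul]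
      _ ≤ ‖f i - g i‖ := h2
  have hcoord : ∀ i, ‖B.repr u i‖ ≤ C i := by
    intro i
    have h := (LinearMap.toContinuousLinearMap (B.coord i)).le_opNorm u
    rw [LinearMap.coe_toContinuousLinearMap', Module.Basis.coord_apply, hu1, mul_one] at h
    exact h
  have hsum : (1 : ℝ) ≤ ∑ i, C i * ‖f i - g i‖ := by
    have hu2 : (⟪u, u⟫ : ℂ) = ∑ i, B.repr u i * ⟪u, B i⟫ := by
      calc (⟪u, u⟫ : ℂ) = ⟪u, ∑ i, B.repr u i • B i⟫ := by rw [B.sum_repr u]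
        _ = ∑ i, B.repr u i * ⟪u, B i⟫ := by
            rw [inner_sum]
            simp only [inner_smul_right]
    have h1 : ‖(⟪u, u⟫ : ℂ)‖ = 1 := by
      rw [inner_self_eq_norm_sq_to_K]
      simp [hu1]
    calc (1 : ℝ) = ‖(⟪u, u⟫ : ℂ)‖ := h1.symm
      _ ≤ ∑ i, ‖B.repr u i * ⟪u, B i⟫‖ := by rw [hu2]; exact norm_sum_le _ _
      _ = ∑ i, ‖B.repr u i‖ * ‖(⟪u, B i⟫ : ℂ)‖ := by simp [norm_mul]
      _ ≤ ∑ i, C i * ‖f i - g i‖ :=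
        Finset.sum_le_sum fun i _ =>
          mul_le_mul (hcoord i) (hip i) (norm_nonneg _) (hC0 i)
  have hlt : ∑ i, C i * ‖f i - g i‖ < 1 := by
    calc ∑ i, C i * ‖f i - g i‖ ≤ ∑ i, C i * (1 / (M + 1)) :=
          Finset.sum_le_sum fun i _ => mul_le_mul_of_nonneg_left (hcon i).le (hC0 i)
      _ = M * (1 / (M + 1)) := by rw [← Finset.sum_mul]
      _ < 1 := by
          rw [mul_one_div, div_lt_one (by linarith)]
          linarith
  linarith

open MeasureTheory ENNReal


end AuxHilbert

/-- Kolmogorov widths of a class `F ⊂ L₂(μ)` in `L₂(μ)`. -/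
def kolW' {D : Type*} [MeasurableSpace D] (μ : Measure D)
    (F : Set (Lp ℂ 2 μ)) (k : ℕ) : ℝ≥0∞ :=
  ⨅ (ℓ : Fin k → Lp ℂ 2 μ → ℂ) (φ : Fin k → Lp ℂ 2 μ),
    ⨆ f ∈ F, (‖f - ∑ i, ℓ i f • φ i‖₊ : ℝ≥0∞)

theorem kolW'_antitone {D : Type*} [MeasurableSpace D] (μ : Measure D) (F : Set (Lp ℂ 2 μ)) :
    Antitone (kolW' μ F) := by
  intro k k' hkk'
  refine le_iInf fun ℓ => le_iInf fun φ => ?_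
  classical
  set G : ℕ → Lp ℂ 2 μ → Lp ℂ 2 μ :=
    fun m f => if h : m < k then ℓ ⟨m, h⟩ f • φ ⟨m, h⟩ else 0 with hG
  set ℓ' : Fin k' → Lp ℂ 2 μ → ℂ := fun i => if h : (i : ℕ) < k then ℓ ⟨i, h⟩ else 0 with hℓ'
  set φ' : Fin k' → Lp ℂ 2 μ := fun i => if h : (i : ℕ) < k then φ ⟨i, h⟩ else 0 with hφ'
  refine le_trans (iInf_le _ ℓ') (le_trans (iInf_le _ φ') ?_)
  refine iSup₂_mono fun f hf => ?_
  have hsum : ∑ i : Fin k', ℓ' i f • φ' i = ∑ i : Fin k, ℓ i f • φ i := by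
    have e1 : ∀ i : Fin k', ℓ' i f • φ' i = G i f := by
      intro i
      by_cases h : (i : ℕ) < k <;> simp [hℓ', hφ', hG, h]
    have e2 : ∀ i : Fin k, ℓ i f • φ i = G i f := by
      intro i
      simp [hG, i.2, Fin.eta]
    rw [Finset.sum_congr rfl fun i _ => e1 i, Finset.sum_congr rfl fun i _ => e2 i,
      Fin.sum_univ_eq_sum_range (fun m => G m f) k, Fin.sum_univ_eq_sum_range (fun m => G m f) k']
    refine (Finset.sum_subset (Finset.range_subset_range.2 hkk') ?_).symm
    intro m _ hm
    rw [Finset.mem_range, not_lt] at hm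
    simp [hG, not_lt.2 hm]
  rw [hsum]

theorem kolW'_zero_case {D : Type*} [MeasurableSpace D] {μ : Measure D} {F : Set (Lp ℂ 2 μ)}
    {k : ℕ} (h0 : kolW' μ F k = 0) :
    ∃ φ : Fin k → Lp ℂ 2 μ, F ⊆ ↑(Submodule.span ℂ (Set.range φ)) := by
  classical
  have key : ∀ f : Fin (k+1) → Lp ℂ 2 μ, (∀ i, f i ∈ F) → ¬ LinearIndependent ℂ f := by
    intro f hfF hind
    obtain ⟨δ, hδpos, hδ⟩ := aux_pos f hind
    have hle : (δ.toNNReal : ℝ≥0∞) ≤ kolW' μ F k := by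
      refine le_iInf fun ℓ => le_iInf fun φ => ?_
      obtain ⟨i, hi⟩ := hδ φ (fun i => ∑ j, ℓ j (f i) • φ j)
        (fun i => Submodule.sum_mem _ fun j _ =>
          Submodule.smul_mem _ _ (Submodule.subset_span ⟨j, rfl⟩))
      refine le_trans ?_ (le_iSup₂_of_le (f i) (hfF i) le_rfl)
      exact ENNReal.coe_le_coe.2 (Real.toNNReal_le_iff_le_coe.2 (by rwa [coe_nnnorm]))
    rw [h0, nonpos_iff_eq_zero, ENNReal.coe_eq_zero, Real.toNNReal_eq_zero] at hle
    linarith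
  obtain ⟨s, hsF, hspan, hsli⟩ := exists_linearIndependent ℂ F
  by_cases hfin : s.Finite
  · by_cases hcard : hfin.toFinset.card ≤ k
    · set e := hfin.toFinset.equivFin with he
      refine ⟨fun i => if h : (i : ℕ) < hfin.toFinset.card then (e.symm ⟨i, h⟩ : Lp ℂ 2 μ)
        else 0, ?_⟩
      have hsub : s ⊆ Set.range (fun i : Fin k =>
          if h : (i : ℕ) < hfin.toFinset.card then (e.symm ⟨i, h⟩ : Lp ℂ 2 μ) else 0) := by
        intro x hx
        refine ⟨⟨e ⟨x, hfin.mem_toFinset.2 hx⟩, lt_of_lt_of_le (e ⟨x, hfin.mem_toFinset.2 hx⟩).2 hcard⟩, ?_⟩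
        simp only [(e ⟨x, hfin.mem_toFinset.2 hx⟩).2, dif_pos, Fin.eta,
          Equiv.symm_apply_apply]
      intro x hx
      have hx1 : x ∈ Submodule.span ℂ s := hspan ▸ Submodule.subset_span hx
      exact Submodule.span_mono hsub hx1
    · exfalso
      push_neg at hcard
      set e := hfin.toFinset.equivFin with he
      have hkc : k + 1 ≤ hfin.toFinset.card := hcard
      set g : Fin (k+1) → s := fun i =>
        ⟨(e.symm (Fin.castLE hkc i) : Lp ℂ 2 μ),
          hfin.mem_toFinset.1 (e.symm (Fin.castLE hkc i)).2⟩ with hg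
      have hginj : Function.Injective g := by
        intro i j hij
        have h1 := congrArg Subtype.val hij
        exact Fin.castLE_injective hkc (e.symm.injective (Subtype.ext h1))
      exact key (fun i => (g i : Lp ℂ 2 μ)) (fun i => hsF (g i).2) (hsli.comp g hginj)
  · exfalso
    have hemb := Set.Infinite.natEmbedding s hfin
    set g : Fin (k+1) → s := fun i => hemb i with hg
    have hginj : Function.Injective g := hemb.injective.comp Fin.val_injective
    exact key (fun i => (g i : Lp ℂ 2 μ)) (fun i => hsF (g i).2) (hsli.comp g hginj)

theorem kolW'_choose {D : Type*} [MeasurableSpace D] (μ : Measure D) (F : Set (Lp ℂ 2 μ))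
    (k : ℕ) :
    ∃ φ : Fin k → Lp ℂ 2 μ, ∀ f ∈ F, ∃ w ∈ Submodule.span ℂ (Set.range φ),
      (‖f - w‖₊ : ℝ≥0∞) ≤ 2 * kolW' μ F k := by
  rcases eq_or_ne (kolW' μ F k) 0 with h0 | h0
  · obtain ⟨φ, hφ⟩ := kolW'_zero_case h0
    exact ⟨φ, fun f hf => ⟨f, hφ hf, by simp⟩⟩
  rcases eq_or_ne (kolW' μ F k) ⊤ with htop | htop
  · exact ⟨fun _ => 0, fun f hf => ⟨0, Submodule.zero_mem _, by simp [htop]⟩⟩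
  · have hlt : kolW' μ F k < 2 * kolW' μ F k := by
      conv_lhs => rw [← one_mul (kolW' μ F k)]
      exact ENNReal.mul_lt_mul_left h0 htop one_lt_two
    rw [kolW'] at hlt
    obtain ⟨ℓ, hℓ⟩ := iInf_lt_iff.1 hlt
    obtain ⟨φ, hφ⟩ := iInf_lt_iff.1 hℓ
    refine ⟨φ, fun f hf => ⟨∑ i, ℓ i f • φ i,
      Submodule.sum_mem _ fun j _ => Submodule.smul_mem _ _ (Submodule.subset_span ⟨j, rfl⟩), ?_⟩⟩
    exact le_trans (le_iSup₂_of_le f hf le_rfl) hφ.le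

open scoped Classical in
theorem statement13 (D : Type*) [MeasurableSpace D] (μ : Measure D)
    (hinf : ¬ FiniteDimensional ℂ (Lp ℂ 2 μ))
    (F : Set (Lp ℂ 2 μ)) :
    ∃ b : ℕ → Lp ℂ 2 μ, Orthonormal ℂ b ∧
      ∀ m : ℕ, 1 ≤ m →
        ⨆ f ∈ F,
          (‖f - (Submodule.orthogonalProjection
              (Submodule.span ℂ ((Finset.image b (Finset.range m) : Finset (Lp ℂ 2 μ)) : Set (Lp ℂ 2 μ))) f :
            Lp ℂ 2 μ)‖₊ : ℝ≥0∞) ≤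
          2 * kolW' μ F (m / 4) := by
  choose φk hφk using fun k => kolW'_choose μ F k
  have hcast : ∀ (a b : ℕ) (h : a = b) (x : Fin a) (y : Fin b), (x : ℕ) = (y : ℕ) →
      φk a x = φk b y := by
    rintro a b rfl x y hxy
    congr 1
    exact Fin.ext hxy
  have hv : ∀ n : ℕ, n + 1 - 2 ^ Nat.log 2 (n+1) < 2 ^ Nat.log 2 (n+1) := by
    intro n
    have h1 : 2 ^ Nat.log 2 (n+1) ≤ n + 1 := Nat.pow_log_le_self 2 (Nat.succ_ne_zero n)
    have h2 : n + 1 < 2 ^ (Nat.log 2 (n+1) + 1) := Nat.lt_pow_succ_log_self one_lt_two (n+1)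
    rw [pow_succ] at h2
    omega
  set v : ℕ → Lp ℂ 2 μ :=
    fun n => φk (2 ^ Nat.log 2 (n+1)) ⟨n + 1 - 2 ^ Nat.log 2 (n+1), hv n⟩ with hvdef
  have hblock : ∀ (t : ℕ) (r : Fin (2^t)), v (2^t - 1 + (r : ℕ)) = φk (2^t) r := by
    intro t r
    have h1 : (1:ℕ) ≤ 2^t := Nat.one_le_two_pow
    have hn1 : (2^t - 1 + (r:ℕ)) + 1 = 2^t + (r:ℕ) := by omega
    have hlog : Nat.log 2 ((2^t - 1 + (r:ℕ)) + 1) = t := by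
      rw [hn1]
      exact Nat.log_eq_of_pow_le_of_lt_pow (Nat.le_add_right _ _)
        (by rw [pow_succ]; have := r.2; omega)
    simp only [hvdef]
    refine hcast _ _ (by rw [hlog]) _ _ ?_
    simp only [hlog]
    omega
  obtain ⟨b, hbo, hbmem⟩ := aux_chain hinf v
  refine ⟨b, hbo, ?_⟩
  intro m hm
  set U := Submodule.span ℂ
    ((Finset.image b (Finset.range m) : Finset (Lp ℂ 2 μ)) : Set (Lp ℂ 2 μ)) with hUdef
  have hUeq : U = Submodule.span ℂ (b '' Set.Iio m) := by
    rw [hUdef, Finset.coe_image, Finset.coe_range]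
  have hproj : ∀ (f : Lp ℂ 2 μ) (w : Lp ℂ 2 μ), w ∈ U →
      (‖f - Submodule.orthogonalProjection U f‖₊ : ℝ≥0∞) ≤ (‖f - w‖₊ : ℝ≥0∞) := by
    intro f w hw
    rw [ENNReal.coe_le_coe, ← NNReal.coe_le_coe, coe_nnnorm, coe_nnnorm]
    exact aux_min U f w hw
  refine iSup₂_le fun f hf => ?_
  rcases Nat.eq_zero_or_pos (m / 4) with h4 | h4
  · have h5 : kolW' μ F 0 = ⨆ g ∈ F, (‖g‖₊ : ℝ≥0∞) := by
      rw [kolW']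
      simp
    rw [h4]
    calc (‖f - Submodule.orthogonalProjection U f‖₊ : ℝ≥0∞) ≤ (‖f - 0‖₊ : ℝ≥0∞) :=
          hproj f 0 (Submodule.zero_mem _)
      _ = (‖f‖₊ : ℝ≥0∞) := by rw [sub_zero]
      _ ≤ kolW' μ F 0 := by rw [h5]; exact le_iSup₂_of_le f hf le_rfl
      _ ≤ 2 * kolW' μ F 0 := by rw [two_mul]; exact le_self_add
  · set j := m / 4 with hj
    have hm4 : 4 * j ≤ m := by omega
    set t := Nat.clog 2 j with ht
    have hjt : j ≤ 2^t := Nat.le_pow_clog one_lt_two j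
    have hpow : 2^(t+1) ≤ m := by
      by_cases hj1 : j = 1
      · have ht0 : t = 0 := by rw [ht, hj1]; exact Nat.clog_one_right 2
        rw [ht0]
        have : (2:ℕ)^(0+1) = 2 := by norm_num
        omega
      · have hj2 : 2 ≤ j := by omega
        have ht1 : 1 ≤ t := by
          rcases Nat.eq_zero_or_pos t with h | h
          · rw [h, pow_zero] at hjt; omega
          · exact h
        have hlt : 2 ^ (t - 1) < j := by
          have h := Nat.pow_pred_clog_lt_self (b := 2) one_lt_two (x := j) hj2
          rwa [Nat.pred_eq_sub_one, ← ht] at h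
        have h2t : 2 ^ t = 2 ^ (t-1) * 2 := by
          rw [← pow_succ]
          congr 1
          omega
        have h2t1 : 2 ^ (t+1) = 2 ^ t * 2 := pow_succ 2 t
        omega
    have hWU : Submodule.span ℂ (Set.range (φk (2^t))) ≤ U := by
      rw [Submodule.span_le]
      rintro x ⟨r, rfl⟩
      have h1 : (1:ℕ) ≤ 2^t := Nat.one_le_two_pow
      have h2t1 : 2 ^ (t+1) = 2 ^ t * 2 := pow_succ 2 t
      have hidx : 2^t - 1 + (r:ℕ) < m := by have := r.2; omega
      have hx := hbmem m (2^t - 1 + (r:ℕ)) hidx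
      rw [hblock t r] at hx
      rw [hUeq]
      exact hx
    obtain ⟨w, hwmem, hwle⟩ := hφk (2^t) f hf
    calc (‖f - Submodule.orthogonalProjection U f‖₊ : ℝ≥0∞) ≤ (‖f - w‖₊ : ℝ≥0∞) :=
          hproj f w (hWU hwmem)
      _ ≤ 2 * kolW' μ F (2^t) := hwle
      _ ≤ 2 * kolW' μ F (m / 4) := mul_le_mul_right (kolW'_antitone μ F hjt) 2

end
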